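/- Let C = ⟨a_1(x),…,a_ρ(x)⟩ be a ρ-generator Λ-multi-twisted code with a_κ(x) = (a_{κ,1}(x),…,a_{κ,ℓ}(x)), and let w_i(x) = gcd(a_{1,i}(x),…,a_{ρ,i}(x), x^{m_i}−λ_i). Then the parity-check polynomial (monic generator of the annihilator ideal Ann(C) = {f ∈ F_q[x] : f·a_κ = 0 in V for all κ}) is h(x) = lcm_{1≤i≤ℓ} [(x^{m_i}−λ_i)/w_i(x)]. -/

import Mathlib

open Polynomial Finset
open scoped Classical

noncomputable instance {F : Type*} [Field F] : NormalizedGCDMonoid (Polynomial F) :=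
  UniqueFactorizationMonoid.toNormalizedGCDMonoid _

noncomputable instance {F : Type*} [Field F] (f : Polynomial F) :
    Algebra (Polynomial F) (AdjoinRoot f) := Ideal.Quotient.algebra _

private lemma algebraMap_adjoinRoot_mk {F : Type*} [Field F] (q p : Polynomial F) :
    algebraMap (Polynomial F) (AdjoinRoot q) p = AdjoinRoot.mk q p := rfl

private lemma key_dvd_iff {F : Type*} [Field F] (g b f : Polynomial F) (hg : g ≠ 0) :
    g ∣ f * b ↔ g / gcd g b ∣ f := by
  set d := gcd g b with hd_def
  have hd : d ≠ 0 := gcd_ne_zero_of_left hg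
  have hgd : d * (g / d) = g :=
    EuclideanDomain.mul_div_cancel' hd (gcd_dvd_left g b)
  have hbd : d * (b / d) = b :=
    EuclideanDomain.mul_div_cancel' hd (gcd_dvd_right g b)
  have hcop : IsCoprime (g / d) (b / d) := by
    rw [hd_def]
    exact isCoprime_div_gcd_div_gcd_of_gcd_ne_zero hd
  constructor
  · intro h
    have h1 : d * (g / d) ∣ d * (f * (b / d)) := by
      rw [hgd, mul_left_comm, hbd]; exact h
    exact hcop.dvd_of_dvd_mul_right ((mul_dvd_mul_iff_left hd).mp h1)
  · intro h
    calc g = (g / d) * d := by rw [mul_comm, hgd]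
    _ ∣ f * b := mul_dvd_mul h (gcd_dvd_right g b)

/-- Let `C = ⟨a_1(x),…,a_ρ(x)⟩` be a `ρ`-generator `Λ`-multi-twisted code, with
`a_κ = (a_{κ,1}(x),…,a_{κ,ℓ}(x))`, and let
`w_i(x) = gcd(a_{1,i}(x),…,a_{ρ,i}(x), x^{m_i}−λ_i)`.  Then the annihilator ideal
`Ann(C) = {f : f·a_κ = 0 in V for all κ}` is generated by the parity-check polynomial
`h(x) = lcm_{1≤i≤ℓ} [(x^{m_i}−λ_i)/w_i(x)]`. -/
theorem parityCheck_of_multiTwisted (F : Type*) [Field F] [Fintype F]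
    (ℓ ρ : ℕ) (m : Fin ℓ → ℕ) (hm : ∀ i, 0 < m i)
    (hco : ∀ i, Nat.Coprime (m i) (Fintype.card F))
    (Λ : Fin ℓ → F) (hΛ : ∀ i, Λ i ≠ 0)
    (A : Fin ρ → Fin ℓ → Polynomial F)
    (Ccode : Submodule (Polynomial F)
      (∀ i, AdjoinRoot ((X : Polynomial F) ^ m i - C (Λ i))))
    (hCcode : Ccode = Submodule.span (Polynomial F)
      (Set.range fun κ => fun i => AdjoinRoot.mk ((X : Polynomial F) ^ m i - C (Λ i)) (A κ i))) :
    Ccode.annihilator = Ideal.span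
      {Finset.univ.lcm fun i =>
        ((X : Polynomial F) ^ m i - C (Λ i)) /
          gcd ((X : Polynomial F) ^ m i - C (Λ i)) (Finset.univ.gcd fun κ => A κ i)} := by
  subst hCcode
  set g : Fin ℓ → Polynomial F := fun i => (X : Polynomial F) ^ m i - C (Λ i) with hg_def
  have hg : ∀ i, g i ≠ 0 := fun i => X_pow_sub_C_ne_zero (hm i) (Λ i)
  ext f
  rw [Submodule.mem_annihilator_span, Ideal.mem_span_singleton]
  have step1 : (∀ n : (Set.range fun κ => fun i => AdjoinRoot.mk (g i) (A κ i)),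
      f • (n : ∀ i, AdjoinRoot (g i)) = 0) ↔ ∀ κ i, g i ∣ f * A κ i := by
    constructor
    · intro h κ i
      have := congrFun (h ⟨_, κ, rfl⟩) i
      simpa [Algebra.smul_def, algebraMap_adjoinRoot_mk, ← map_mul,
        AdjoinRoot.mk_eq_zero] using this
    · intro h n
      obtain ⟨x, κ, rfl⟩ := n
      funext i
      simpa [Algebra.smul_def, algebraMap_adjoinRoot_mk, ← map_mul,
        AdjoinRoot.mk_eq_zero] using h κ i
  rw [step1]
  have step2 : (∀ κ i, g i ∣ f * A κ i) ↔
      ∀ i, g i ∣ f * Finset.univ.gcd fun κ => A κ i := by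
    constructor
    · intro h i
      have h1 : g i ∣ Finset.univ.gcd fun κ => f * A κ i :=
        Finset.dvd_gcd fun κ _ => h κ i
      exact h1.trans (Finset.gcd_mul_left' (s := univ) (f := fun κ => A κ i) f).dvd
    · intro h κ i
      exact (h i).trans (mul_dvd_mul_left f (Finset.gcd_dvd (mem_univ κ)))
  rw [step2]
  have step3 : ∀ i, (g i ∣ f * Finset.univ.gcd fun κ => A κ i) ↔
      (g i / gcd (g i) (Finset.univ.gcd fun κ => A κ i)) ∣ f :=
    fun i => key_dvd_iff _ _ _ (hg i)
  constructor
  · intro h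
    exact Finset.lcm_dvd fun i _ => (step3 i).mp (h i)
  · intro h i
    exact (step3 i).mpr ((Finset.dvd_lcm (s := univ)
      (f := fun i => g i / gcd (g i) (Finset.univ.gcd fun κ => A κ i)) (mem_univ i)).trans h)
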